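/- Let A be a finite type, d a natural number, β > 0 a real, π_ref : A → ℝ with π_ref(a) > 0 for all a, and Adv : A → ℝ. Let π : ℝ^d → A → ℝ be such that π(θ, a) > 0 for all θ and a, ∑_a π(θ, a) = 1 for every θ, and θ ↦ π(θ, a) is differentiable at a point θ₀ for every a. Define I(θ) = ∑_a π(θ, a)·(Adv(a) − β·log(π(θ, a)/π_ref(a))) and H(θ) = (1/2)·∑_a π(θ₀, a)·(Adv(a)/β − log(π(θ, a)/π_ref(a)))². Then the gradient of I at θ₀ equals −β times the gradient of H at θ₀. -/

import Mathlib

/-- **Lemma 1 (equivalent update).** The gradient of the one-step KL-regularized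
policy improvement objective `I` equals `−β` times the gradient of the squared-error
surrogate `H` in which the expectation is taken under the frozen policy `π θ₀`. -/
theorem dapo_equivalent_update {A : Type*} [Fintype A] (d : ℕ) (β : ℝ) (hβ : 0 < β)
    (πref : A → ℝ) (hπref : ∀ a, 0 < πref a) (Adv : A → ℝ)
    (π : EuclideanSpace ℝ (Fin d) → A → ℝ)
    (hπpos : ∀ θ a, 0 < π θ a)
    (hπsum : ∀ θ, ∑ a, π θ a = 1)
    (θ₀ : EuclideanSpace ℝ (Fin d))
    (hdiff : ∀ a, DifferentiableAt ℝ (fun θ => π θ a) θ₀) :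
    gradient (fun θ => ∑ a, π θ a * (Adv a - β * Real.log (π θ a / πref a))) θ₀ =
      (-β) • gradient
        (fun θ => (1 / 2) * ∑ a, π θ₀ a * (Adv a / β - Real.log (π θ a / πref a)) ^ 2) θ₀ := by
  classical
  have hβ' : (β : ℝ) ≠ 0 := ne_of_gt hβ
  set D : A → (EuclideanSpace ℝ (Fin d) →L[ℝ] ℝ) :=
    fun a => fderiv ℝ (fun θ => π θ a) θ₀ with hDdef
  have hDa : ∀ a, HasFDerivAt (fun θ => π θ a) (D a) θ₀ := fun a => (hdiff a).hasFDerivAt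
  -- derivative of the log ratio
  have hlog : ∀ a, HasFDerivAt (fun θ => Real.log (π θ a / πref a))
      ((π θ₀ a)⁻¹ • D a) θ₀ := by
    intro a
    have h1 : HasFDerivAt (fun θ => π θ a / πref a) ((πref a)⁻¹ • D a) θ₀ := by
      simpa [div_eq_mul_inv] using (hDa a).mul_const (πref a)⁻¹
    have h2 := h1.log (div_pos (hπpos θ₀ a) (hπref a)).ne'
    refine h2.congr_fderiv (Eq.symm ?_)
    rw [smul_smul]
    congr 1
    have h3 : π θ₀ a ≠ 0 := (hπpos θ₀ a).ne'
    have h4 : πref a ≠ 0 := (hπref a).ne'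
    field_simp
  -- derivatives of π sum to zero
  have hsumD : ∑ a, D a = 0 := by
    have h : HasFDerivAt (fun θ => ∑ a, π θ a) (∑ a, D a) θ₀ :=
      HasFDerivAt.fun_sum (fun a _ => hDa a)
    have heq : (fun θ => ∑ a, π θ a) = fun _ : EuclideanSpace ℝ (Fin d) => (1 : ℝ) :=
      funext hπsum
    rw [heq] at h
    exact h.unique (hasFDerivAt_const 1 θ₀)
  -- derivative of I
  have hI : HasFDerivAt (fun θ => ∑ a, π θ a * (Adv a - β * Real.log (π θ a / πref a)))
      (∑ a, (Adv a - β * Real.log (π θ₀ a / πref a) - β) • D a) θ₀ := by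
    apply HasFDerivAt.fun_sum
    intro a _
    have h := (hDa a).fun_mul (((hlog a).const_mul β).const_sub (Adv a))
    refine h.congr_fderiv (Eq.symm ?_)
    ext v
    have h3 : π θ₀ a ≠ 0 := (hπpos θ₀ a).ne'
    simp only [ContinuousLinearMap.add_apply, ContinuousLinearMap.smul_apply,
      ContinuousLinearMap.coe_smul', Pi.smul_apply, ContinuousLinearMap.neg_apply,
      ContinuousLinearMap.coe_neg', smul_eq_mul]
    field_simp
    ring
  -- derivative of H
  have hH : HasFDerivAt
      (fun θ => (1 / 2 : ℝ) * ∑ a, π θ₀ a * (Adv a / β - Real.log (π θ a / πref a)) ^ 2)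
      (∑ a, (-(Adv a / β - Real.log (π θ₀ a / πref a))) • D a) θ₀ := by
    have hsum : HasFDerivAt
        (fun θ => ∑ a, π θ₀ a * (Adv a / β - Real.log (π θ a / πref a)) ^ 2)
        (∑ a, (-2 * (Adv a / β - Real.log (π θ₀ a / πref a))) • D a) θ₀ := by
      apply HasFDerivAt.fun_sum
      intro a _
      have hg : HasFDerivAt (fun θ => Adv a / β - Real.log (π θ a / πref a))
          (-((π θ₀ a)⁻¹ • D a)) θ₀ := (hlog a).const_sub (Adv a / β)
      have h := (hg.fun_mul hg).const_mul (π θ₀ a)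
      simp only [sq]
      refine h.congr_fderiv (Eq.symm ?_)
      ext v
      have h3 : π θ₀ a ≠ 0 := (hπpos θ₀ a).ne'
      simp only [ContinuousLinearMap.add_apply, ContinuousLinearMap.smul_apply,
        ContinuousLinearMap.coe_smul', Pi.smul_apply, ContinuousLinearMap.neg_apply,
        ContinuousLinearMap.coe_neg', smul_eq_mul]
      field_simp
      ring
    have h := hsum.const_mul (1 / 2 : ℝ)
    refine h.congr_fderiv (Eq.symm ?_)
    rw [Finset.smul_sum]
    apply Finset.sum_congr rfl
    intro a _
    rw [smul_smul]
    congr 1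
    ring
  -- conclude
  have key : (∑ a, (Adv a - β * Real.log (π θ₀ a / πref a) - β) • D a)
      = (-β) • (∑ a, (-(Adv a / β - Real.log (π θ₀ a / πref a))) • D a) := by
    have h1 : (∑ a, (Adv a - β * Real.log (π θ₀ a / πref a) - β) • D a)
        = ∑ a, (Adv a - β * Real.log (π θ₀ a / πref a)) • D a := by
      have h2 : (∑ a, (Adv a - β * Real.log (π θ₀ a / πref a) - β) • D a)
          = (∑ a, (Adv a - β * Real.log (π θ₀ a / πref a)) • D a) - β • (∑ a, D a) := by
        rw [Finset.smul_sum, ← Finset.sum_sub_distrib]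
        exact Finset.sum_congr rfl fun a _ => by module
      rw [h2, hsumD, smul_zero, sub_zero]
    rw [h1, Finset.smul_sum]
    apply Finset.sum_congr rfl
    intro a _
    rw [smul_smul]
    congr 1
    field_simp
  rw [gradient, gradient, hI.fderiv, hH.fderiv, key, map_smul]
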